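/- (Feldheim–Vilenkin generating function) For every real N > 0 and all real r, θ, the series Σ_{n=0}^∞ (C_n^N(cos θ)/(2N)_n) r^n converges and equals exp(r cos θ) · j_{N-1/2}(r sin θ); equivalently, Σ_{n=0}^∞ (C_n^N(cos θ)/C_n^N(1)) r^n/n! = exp(r cos θ) j_{N-1/2}(r sin θ), where C_n^N(1) = (2N)_n/n!. -/

import Mathlib

set_option maxHeartbeats 1000000

open Finset Polynomial

noncomputable def P (k : ℕ) (y : ℝ) : ℝ := (ascPochhammer ℝ k).eval y
lemma P_zero (y : ℝ) : P 0 y = 1 := by simp [P]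
lemma P_succ (k : ℕ) (y : ℝ) : P (k+1) y = P k y * (y + k) := by
  simp [P, ascPochhammer_succ_eval]
lemma P_pos {y : ℝ} (hy : 0 < y) (k : ℕ) : 0 < P k y := by
  induction k with
  | zero => simp [P_zero]
  | succ k ih => rw [P_succ]; positivity
lemma P_add (a b : ℕ) (y : ℝ) : P (a+b) y = P a y * P b (y + a) := by
  induction b with
  | zero => simp [P_zero]
  | succ b ih => rw [← add_assoc, P_succ, ih, P_succ]; push_cast; ring
lemma P_succ_left (k : ℕ) (y : ℝ) : P (k+1) y = y * P k (y+1) := by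
  have := P_add 1 k y
  simpa [P_succ, P_zero, add_comm 1 k] using this

lemma P_half_ne (q i : ℕ) : P i ((1:ℝ)/2 - q) ≠ 0 := by
  induction i with
  | zero => simp [P_zero]
  | succ i ih =>
    rw [P_succ]
    refine mul_ne_zero ih ?_
    intro h
    have : ((1 + 2*i : ℕ) : ℝ) = ((2*q : ℕ) : ℝ) := by push_cast; linarith
    have := Nat.cast_injective (R := ℝ) this
    omega

lemma P_mhalf_ne (q i : ℕ) : P i (-(1:ℝ)/2 - q) ≠ 0 := by
  induction i with
  | zero => simp [P_zero]
  | succ i ih =>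
    rw [P_succ]
    refine mul_ne_zero ih ?_
    intro h
    have : ((2*i : ℕ) : ℝ) = ((2*q + 1 : ℕ) : ℝ) := by push_cast; linarith
    have := Nat.cast_injective (R := ℝ) this
    omega

lemma vandermonde (n : ℕ) : ∀ b c : ℝ, (∀ i, P i c ≠ 0) →
    ∑ i ∈ Finset.range (n+1), (n.choose i : ℝ) * (-1)^i * P i b / P i c
      = P n (c - b) / P n c := by
  induction n with
  | zero => intro b c hc; simp [P_zero]
  | succ n ih =>
    intro b c hc
    have hc1 : ∀ i, P i (c+1) ≠ 0 := by
      intro i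
      have h := hc (i+1)
      rw [P_succ_left] at h
      exact fun h0 => h (by rw [h0, mul_zero])
    have hcne : c ≠ 0 := by
      have := hc 1; simpa [P_succ, P_zero] using this
    have hcn : c + (n:ℝ) ≠ 0 := by
      have := hc (n+1); rw [P_succ] at this
      exact fun h0 => this (by rw [h0, mul_zero])
    rw [Finset.sum_range_succ'] 
    have step : ∀ i ∈ Finset.range (n+1),
        ((n+1).choose (i+1) : ℝ) * (-1)^(i+1) * P (i+1) b / P (i+1) c
        = (n.choose (i+1) : ℝ) * (-1)^(i+1) * P (i+1) b / P (i+1) c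
          + (-(b/c)) * ((n.choose i : ℝ) * (-1)^i * P i (b+1) / P i (c+1)) := by
      intro i _
      rw [Nat.choose_succ_succ]
      push_cast
      rw [P_succ_left i b, P_succ_left i c]
      field_simp
      ring
    rw [Finset.sum_congr rfl step, Finset.sum_add_distrib, ← Finset.mul_sum,
      ih (b+1) (c+1) hc1]
    have e1 : (∑ i ∈ Finset.range (n+1),
        (n.choose (i+1) : ℝ) * (-1)^(i+1) * P (i+1) b / P (i+1) c)
        + ((n+1).choose 0 : ℝ) * (-1)^0 * P 0 b / P 0 c
        = ∑ i ∈ Finset.range (n+1), (n.choose i : ℝ) * (-1)^i * P i b / P i c := by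
      conv_rhs => rw [Finset.sum_range_succ']
      rw [Finset.sum_range_succ]
      simp [Nat.choose_succ_self]
    rw [add_right_comm, e1, ih b c hc]
    have h1 : c + 1 - (b + 1) = c - b := by ring
    rw [h1]
    have hPc : P n c ≠ 0 := hc n
    have hPc1 : P n (c+1) ≠ 0 := hc1 n
    have key1 : P (n+1) c = P n c * (c + n) := P_succ n c
    have key2 : P (n+1) c = c * P n (c+1) := P_succ_left n c
    have key3 : P (n+1) (c-b) = P n (c-b) * (c - b + n) := P_succ n (c-b)
    rw [key3, key1]
    have hthis : c * P n (c+1) = P n c * (c + n) := by rw [← key2, key1]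
    have hrepl : P n (c+1) = P n c * (c + n) / c := by
      field_simp [hcne] at hthis ⊢; linarith [hthis]
    rw [hrepl]
    field_simp
    ring

/-- even parity factorial split -/
lemma parity_even (q : ℕ) : ∀ i, i ≤ q →
    ((2*q).factorial : ℝ) = ((2*q-2*i).factorial : ℝ) * 4^i * (q.choose i) *
      (i.factorial) * (-1)^i * P i (1/2 - q) := by
  intro i
  induction i with
  | zero => simp [P_zero]
  | succ i ih =>
    intro h
    have hi : i ≤ q := by omega
    have efac : ((2*q-2*i).factorial : ℝ) = ((2*q-2*(i+1)).factorial : ℝ)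
        * ((2:ℝ)*q - 2*i - 1) * ((2:ℝ)*q - 2*i) := by
      have e2 : 2*q - 2*i = (2*q - 2*(i+1)) + 1 + 1 := by omega
      rw [e2, Nat.factorial_succ, Nat.factorial_succ]
      have c1 : ((2*q - 2*(i+1) + 1 : ℕ) : ℝ) = (2:ℝ)*q - 2*i - 1 := by
        push_cast [Nat.cast_sub (by omega : 2*(i+1) ≤ 2*q)]; ring
      have c2 : ((2*q - 2*(i+1) + 1 + 1 : ℕ) : ℝ) = (2:ℝ)*q - 2*i := by
        push_cast [Nat.cast_sub (by omega : 2*(i+1) ≤ 2*q)]; ring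
      push_cast at c1 c2 ⊢
      rw [c2] at *
      linear_combination ((2*(q:ℝ) - 2*(i:ℝ)) * ((2*q-2*(i+1)).factorial : ℝ)) * c1
    have hch : ((q.choose (i+1) : ℝ)) * (i+1) = (q.choose i : ℝ) * ((q:ℝ) - i) := by
      have h2 := congrArg (fun x : ℕ => (x : ℝ)) (Nat.choose_succ_right_eq q i)
      push_cast [Nat.cast_sub hi] at h2
      simpa using h2
    have hP : P (i+1) (1/2 - q) = P i (1/2 - q) * (1/2 - (q:ℝ) + i) := P_succ i _
    rw [ih hi, efac, hP, Nat.factorial_succ]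
    push_cast
    linear_combination (((2*q-2*(i+1)).factorial :ℝ) * 4^i * (i.factorial) * (-1)^i
      * P i (1/2-(q:ℝ)) * 4 * (1/2-(q:ℝ)+i)) * hch

/-- odd parity factorial split -/
lemma parity_odd (q : ℕ) : ∀ i, i ≤ q →
    ((2*q+1).factorial : ℝ) = ((2*q+1-2*i).factorial : ℝ) * 4^i * (q.choose i) *
      (i.factorial) * (-1)^i * P i (-1/2 - q) := by
  intro i
  induction i with
  | zero => simp [P_zero]
  | succ i ih =>
    intro h
    have hi : i ≤ q := by omega
    have efac : ((2*q+1-2*i).factorial : ℝ) = ((2*q+1-2*(i+1)).factorial : ℝ)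
        * ((2:ℝ)*q - 2*i) * ((2:ℝ)*q + 1 - 2*i) := by
      have e2 : 2*q+1 - 2*i = 2*q+1 - 2*(i+1) + 1 + 1 := by omega
      rw [e2, Nat.factorial_succ, Nat.factorial_succ]
      have c1 : ((2*q+1 - 2*(i+1) : ℕ) : ℝ) + 1 = (2:ℝ)*q - 2*i := by
        push_cast [Nat.cast_sub (by omega : 2*(i+1) ≤ 2*q+1)]; ring
      have c2 : ((2*q+1 - 2*(i+1) + 1 + 1 : ℕ) : ℝ) = (2:ℝ)*q + 1 - 2*i := by
        push_cast [Nat.cast_sub (by omega : 2*(i+1) ≤ 2*q+1)]; ring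
      push_cast at c1 c2 ⊢
      rw [c2] at *
      linear_combination ((2*(q:ℝ) + 1 - 2*(i:ℝ)) * ((2*q+1-2*(i+1)).factorial : ℝ)) * c1
    have hch : ((q.choose (i+1) : ℝ)) * (i+1) = (q.choose i : ℝ) * ((q:ℝ) - i) := by
      have h2 := congrArg (fun x : ℕ => (x : ℝ)) (Nat.choose_succ_right_eq q i)
      push_cast [Nat.cast_sub hi] at h2
      simpa using h2
    have hP : P (i+1) (-1/2 - q) = P i (-1/2 - q) * (-1/2 - (q:ℝ) + i) := P_succ i _
    rw [ih hi, efac, hP, Nat.factorial_succ]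
    push_cast
    linear_combination (((2*q+1-2*(i+1)).factorial :ℝ) * 4^i * (i.factorial) * (-1)^i
      * P i (-1/2-(q:ℝ)) * 4 * (-1/2-(q:ℝ)+i)) * hch

/-- duplication, even -/
lemma dup_even (y : ℝ) : ∀ r : ℕ, P (2*r) (2*y) = 4^r * P r y * P r (y + 1/2)
  | 0 => by simp [P_zero]
  | (r+1) => by
    have e1 : 2*(r+1) = (2*r) + 1 + 1 := by ring
    rw [e1, P_succ, P_succ, dup_even y r, P_succ, P_succ]
    push_cast
    ring

/-- duplication, odd -/
lemma dup_odd (y : ℝ) (r : ℕ) :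
    P (2*r+1) (2*y) = 2 * (y + r) * 4^r * P r y * P r (y + 1/2) := by
  rw [P_succ, dup_even y r]
  push_cast
  ring


lemma P_def (k : ℕ) (y : ℝ) : (ascPochhammer ℝ k).eval y = P k y := rfl

lemma key (N : ℝ) (hN : 0 < N) (n m : ℕ) (hm : m ≤ n/2) :
    ∑ k ∈ Finset.range (n/2+1), (k.choose m : ℝ) /
        (((n-2*k).factorial : ℝ) * (k.factorial : ℝ) * P k (N+1/2) * 4^k)
      = P (n-m) N * 2^(n-2*m) /
        (((n-2*m).factorial : ℝ) * (m.factorial : ℝ) * P n (2*N)) := by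
  have hA : (0:ℝ) < N + 1/2 := by linarith
  have hB : (0:ℝ) < N + 1/2 + m := by positivity
  set q : ℕ := n/2 - m with hq
  have hsub : Finset.Ico m (n/2+1) ⊆ Finset.range (n/2+1) := by
    rw [Finset.range_eq_Ico]; exact Finset.Ico_subset_Ico (Nat.zero_le m) le_rfl
  rw [← Finset.sum_subset hsub (by
    intro k hk hk2
    simp only [Finset.mem_range, Finset.mem_Ico] at hk hk2
    have : k < m := by omega
    rw [Nat.choose_eq_zero_of_lt this]
    simp)]
  rw [Finset.sum_Ico_eq_sum_range]
  have hrange : n/2 + 1 - m = q + 1 := by omega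
  rw [hrange]
  have hterm : ∀ i ∈ Finset.range (q+1),
      (((m+i).choose m : ℝ)) /
        (((n-2*(m+i)).factorial : ℝ) * ((m+i).factorial : ℝ) * P (m+i) (N+1/2) * 4^(m+i))
      = (1 / ((m.factorial : ℝ) * 4^m * P m (N+1/2))) *
        (1 / (((n-2*m-2*i).factorial : ℝ) * (i.factorial : ℝ) * P i (N+1/2+m) * 4^i)) := by
    intro i hi
    simp only [Finset.mem_range] at hi
    have hsub2 : n - 2*(m+i) = n - 2*m - 2*i := by omega
    have hfac : (((m+i).factorial : ℝ)) = ((m+i).choose m : ℝ) * m.factorial * i.factorial := by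
      have h1 := Nat.choose_mul_factorial_mul_factorial (Nat.le_add_right m i)
      have h2 := congrArg (fun x : ℕ => (x : ℝ)) h1
      simp only [Nat.add_sub_cancel_left] at h2
      push_cast at h2 ⊢
      all_goals linarith [h2]
    have hPadd : P (m+i) (N+1/2) = P m (N+1/2) * P i (N+1/2+m) := by
      rw [P_add]; try ring_nf
    have hC : ((m+i).choose m : ℝ) ≠ 0 := by
      have := Nat.choose_pos (Nat.le_add_right m i)
      positivity
    have h4 : (4:ℝ)^(m+i) = 4^m * 4^i := pow_add 4 m i
    rw [hsub2, hfac, hPadd, h4]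
    have n1 : ((n-2*m-2*i).factorial : ℝ) ≠ 0 := Nat.cast_ne_zero.mpr (Nat.factorial_ne_zero _)
    have n2 : (m.factorial : ℝ) ≠ 0 := Nat.cast_ne_zero.mpr (Nat.factorial_ne_zero _)
    have n3 : (i.factorial : ℝ) ≠ 0 := Nat.cast_ne_zero.mpr (Nat.factorial_ne_zero _)
    have n4 : P m (N+1/2) ≠ 0 := ne_of_gt (P_pos hA m)
    have n5 : P i (N+1/2+m) ≠ 0 := ne_of_gt (P_pos hB i)
    set PmA := P m (N+1/2)
    set PiB := P i (N+1/2+(m:ℝ))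
    field_simp
  rw [Finset.sum_congr rfl hterm, ← Finset.mul_sum]
  have n2 : (m.factorial : ℝ) ≠ 0 := Nat.cast_ne_zero.mpr (Nat.factorial_ne_zero _)
  have n4 : P m (N+1/2) ≠ 0 := ne_of_gt (P_pos hA m)
  have nB : ∀ i, P i (N+1/2+m) ≠ 0 := fun i => ne_of_gt (P_pos hB i)
  have nqB : P q (N+1/2+m) ≠ 0 := nB q
  have hNmq : (0:ℝ) < N + m + q := by positivity
  have nmqN : P (m+q) N ≠ 0 := ne_of_gt (P_pos hN _)
  rcases Nat.even_or_odd (n - 2*m) with ⟨t, ht⟩ | ⟨t, ht⟩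
  · -- even case
    have htq : t = q := by omega
    subst htq
    have hn : n = 2*(m+q) := by omega
    have hterm2 : ∀ i ∈ Finset.range (q+1),
        (1:ℝ) / (((n-2*m-2*i).factorial : ℝ) * (i.factorial : ℝ) * P i (N+1/2+m) * 4^i)
        = (1/((2*q).factorial : ℝ)) *
          ((q.choose i : ℝ) * (-1)^i * P i (1/2 - q) / P i (N+1/2+m)) := by
      intro i hi
      simp only [Finset.mem_range] at hi
      have hiq : i ≤ q := by omega
      have hpe := parity_even q i hiq
      have hss : n - 2*m - 2*i = 2*q - 2*i := by omega
      rw [hss, hpe]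
      have nf : ((2*q-2*i).factorial : ℝ) ≠ 0 := Nat.cast_ne_zero.mpr (Nat.factorial_ne_zero _)
      have n3 : (i.factorial : ℝ) ≠ 0 := Nat.cast_ne_zero.mpr (Nat.factorial_ne_zero _)
      have nh : P i (1/2 - (q:ℝ)) ≠ 0 := P_half_ne q i
      have hCpos : (0:ℕ) < q.choose i := Nat.choose_pos hiq
      have nC : (q.choose i : ℝ) ≠ 0 := by positivity
      set K := P i (1/2 - (q:ℝ))
      set PiB := P i (N+1/2+(m:ℝ))
      have nPiB : PiB ≠ 0 := nB i
      field_simp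
      all_goals ring
    rw [Finset.sum_congr rfl hterm2, ← Finset.mul_sum,
      vandermonde q (1/2 - q) (N+1/2+m) nB]
    have hbc : N + 1/2 + (m:ℝ) - (1/2 - q) = N + m + q := by ring
    rw [hbc]
    have hPn : P n (2*N) = 4^(m+q) * P (m+q) N * P (m+q) (N + 1/2) := by
      rw [hn]; exact dup_even N (m+q)
    have hnm : n - m = (m+q) + q := by omega
    have hPnm : P (n-m) N = P (m+q) N * P q (N + m + q) := by
      rw [hnm, P_add]; push_cast; try ring_nf
    have hPmq : P (m+q) (N+1/2) = P m (N+1/2) * P q (N+1/2+m) := by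
      rw [P_add]; try ring_nf
    have h2p : (2:ℝ)^(n-2*m) = 4^q := by
      rw [ht, show q+q = 2*q from by ring, pow_mul]; norm_num
    have hfacp : ((n-2*m).factorial : ℝ) = ((2*q).factorial : ℝ) := by
      have : n - 2*m = 2*q := by omega
      rw [this]
    rw [hPn, hPnm, hPmq, h2p, hfacp]
    have nf2 : ((2*q).factorial : ℝ) ≠ 0 := Nat.cast_ne_zero.mpr (Nat.factorial_ne_zero _)
    have nPq : P q (N + m + q) ≠ 0 := ne_of_gt (P_pos hNmq q)
    set PmA := P m (N+1/2)
    set PqB := P q (N+1/2+(m:ℝ))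
    set PqX := P q (N+(m:ℝ)+q)
    set PN := P (m+q) N
    have lhs_eq : (1 / ((m.factorial : ℝ) * 4^m * PmA)) * ((1/((2*q).factorial : ℝ)) * (PqX / PqB))
        = PqX / ((m.factorial : ℝ) * 4^m * PmA * ((2*q).factorial : ℝ) * PqB) := by
      field_simp
      all_goals exact Or.inl (by ring)
    rw [lhs_eq, div_eq_div_iff (by positivity) (by
      refine mul_ne_zero (mul_ne_zero nf2 n2) ?_
      refine mul_ne_zero (mul_ne_zero (by positivity) nmqN) (mul_ne_zero n4 nqB))]
    ring
  · -- odd case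
    have htq : t = q := by omega
    subst htq
    have hn : n = 2*(m+q)+1 := by omega
    have hterm2 : ∀ i ∈ Finset.range (q+1),
        (1:ℝ) / (((n-2*m-2*i).factorial : ℝ) * (i.factorial : ℝ) * P i (N+1/2+m) * 4^i)
        = (1/((2*q+1).factorial : ℝ)) *
          ((q.choose i : ℝ) * (-1)^i * P i (-1/2 - q) / P i (N+1/2+m)) := by
      intro i hi
      simp only [Finset.mem_range] at hi
      have hiq : i ≤ q := by omega
      have hpe := parity_odd q i hiq
      have hss : n - 2*m - 2*i = 2*q+1 - 2*i := by omega
      rw [hss, hpe]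
      have nf : ((2*q+1-2*i).factorial : ℝ) ≠ 0 := Nat.cast_ne_zero.mpr (Nat.factorial_ne_zero _)
      have n3 : (i.factorial : ℝ) ≠ 0 := Nat.cast_ne_zero.mpr (Nat.factorial_ne_zero _)
      have nh : P i (-1/2 - (q:ℝ)) ≠ 0 := P_mhalf_ne q i
      have hCpos : (0:ℕ) < q.choose i := Nat.choose_pos hiq
      have nC : (q.choose i : ℝ) ≠ 0 := by positivity
      set K := P i (-1/2 - (q:ℝ))
      set PiB := P i (N+1/2+(m:ℝ))
      have nPiB : PiB ≠ 0 := nB i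
      field_simp
      all_goals ring
    rw [Finset.sum_congr rfl hterm2, ← Finset.mul_sum,
      vandermonde q (-1/2 - q) (N+1/2+m) nB]
    have hbc : N + 1/2 + (m:ℝ) - (-1/2 - q) = N + m + q + 1 := by ring
    rw [hbc]
    have hPn : P n (2*N) = 2*(N+m+q) * 4^(m+q) * P (m+q) N * P (m+q) (N + 1/2) := by
      rw [hn, dup_odd N (m+q)]; push_cast; ring
    have hnm : n - m = (m+q) + (q+1) := by omega
    have hPnm : P (n-m) N = P (m+q) N * ((N+m+q) * P q (N + m + q + 1)) := by
      rw [hnm, P_add, P_succ_left]; push_cast; try ring_nf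
    have hPmq : P (m+q) (N+1/2) = P m (N+1/2) * P q (N+1/2+m) := by
      rw [P_add]; try ring_nf
    have h2p : (2:ℝ)^(n-2*m) = 2 * 4^q := by
      rw [ht, pow_succ, pow_mul]; norm_num; ring
    have hfacp : ((n-2*m).factorial : ℝ) = ((2*q+1).factorial : ℝ) := by
      have : n - 2*m = 2*q+1 := by omega
      rw [this]
    rw [hPn, hPnm, hPmq, h2p, hfacp]
    have nf2 : ((2*q+1).factorial : ℝ) ≠ 0 := Nat.cast_ne_zero.mpr (Nat.factorial_ne_zero _)
    have nPq : P q (N + m + q + 1) ≠ 0 := ne_of_gt (P_pos (by positivity) q)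
    set PmA := P m (N+1/2)
    set PqB := P q (N+1/2+(m:ℝ))
    set PqX := P q (N+(m:ℝ)+q+1)
    set PN := P (m+q) N
    have lhs_eq : (1 / ((m.factorial : ℝ) * 4^m * PmA)) * ((1/((2*q+1).factorial : ℝ)) * (PqX / PqB))
        = PqX / ((m.factorial : ℝ) * 4^m * PmA * ((2*q+1).factorial : ℝ) * PqB) := by
      field_simp
      all_goals exact Or.inl (by ring)
    rw [lhs_eq, div_eq_div_iff (by positivity) (by
      refine mul_ne_zero (mul_ne_zero nf2 n2) ?_
      refine mul_ne_zero (mul_ne_zero (mul_ne_zero (ne_of_gt (by linarith [hNmq])) (by positivity)) nmqN) (mul_ne_zero n4 nqB))]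
    ring

/-- lower bound for Pochhammer -/
lemma P_ge {A : ℝ} (hA : 0 < A) (k : ℕ) : min A 1 ≤ P k A := by
  cases k with
  | zero => simp [P_zero]
  | succ k =>
    have h : A ≤ P (k+1) A := by
      induction k with
      | zero => simp [P_succ, P_zero]
      | succ k ih =>
        rw [P_succ]
        push_cast
        nlinarith [ih, P_pos hA (k+1), (Nat.cast_nonneg k : (0:ℝ) ≤ k), hA]
    exact le_trans (min_le_left A 1) h

/-- summability of the Bessel series -/
lemma bessel_summable_norm {A : ℝ} (hA : 0 < A) (u : ℝ) :
    Summable (fun k : ℕ => ‖(-1) ^ k / ((k.factorial : ℝ) * P k A) * (u / 2) ^ (2 * k)‖) := by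
  have hmin : 0 < min A 1 := lt_min hA one_pos
  refine Summable.of_nonneg_of_le (fun k => norm_nonneg _) ?_
    (((Real.summable_pow_div_factorial ((u/2)^2)).mul_left ((min A 1)⁻¹)))
  intro k
  have hPk := P_pos hA k
  have hge := P_ge hA k
  have hfk : (0:ℝ) < k.factorial := by positivity
  have hb : ‖(-1:ℝ) ^ k / ((k.factorial : ℝ) * P k A) * (u / 2) ^ (2 * k)‖
      = ((u/2)^2)^k / ((k.factorial : ℝ) * P k A) := by
    rw [norm_mul, norm_div, norm_pow, norm_pow]
    simp only [Real.norm_eq_abs, abs_neg, abs_one, one_pow]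
    rw [abs_of_pos (by positivity : (0:ℝ) < (k.factorial : ℝ) * P k A)]
    rw [← pow_mul, ← abs_pow, pow_mul, abs_of_nonneg (by positivity : (0:ℝ) ≤ ((u/2)^2)^k)]
    ring
  rw [hb]
  have hrhs : (min A 1)⁻¹ * (((u/2)^2)^k / (k.factorial : ℝ))
      = ((u/2)^2)^k / ((k.factorial : ℝ) * min A 1) := by
    field_simp
    all_goals exact Or.inl (by ring)
  rw [hrhs]
  apply div_le_div_of_nonneg_left (by positivity) (by positivity)
  have : min A 1 ≤ P k A := hge
  nlinarith [hfk, this]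


/-- The Gegenbauer polynomial `C_n^N(X)` (real parameter and argument). -/
noncomputable def Geg (n : ℕ) (N X : ℝ) : ℝ :=
  ∑ k ∈ Finset.range (n / 2 + 1),
    (-1) ^ k * ((ascPochhammer ℝ (n - k)).eval N /
      (((n - 2 * k).factorial : ℝ) * (k.factorial : ℝ))) * (2 * X) ^ (n - 2 * k)

/-- The normalized Bessel function `j_ν(u) = Σ_k ((-1)^k/(k! (ν+1)_k)) (u/2)^(2k)`. -/
noncomputable def besselj (ν u : ℝ) : ℝ :=
  ∑' k : ℕ, (-1) ^ k / ((k.factorial : ℝ) * (ascPochhammer ℝ k).eval (ν + 1)) * (u / 2) ^ (2 * k)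


lemma per_n (N : ℝ) (hN : 0 < N) (r θ : ℝ) (n : ℕ) :
    ∑ k ∈ Finset.range (n/2+1),
      ((r*Real.cos θ)^(n-2*k) / ((n-2*k).factorial : ℝ)) *
        ((-1)^k / ((k.factorial : ℝ) * P k (N+1/2)) * ((r*Real.sin θ)/2)^(2*k))
    = Geg n N (Real.cos θ) / P n (2*N) * r^n := by
  set c := Real.cos θ with hc
  set s := Real.sin θ with hs
  have hs2 : s^2 = 1 - c^2 := by nlinarith [Real.sin_sq_add_cos_sq θ]
  calc
    ∑ k ∈ Finset.range (n/2+1),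
      ((r*c)^(n-2*k) / ((n-2*k).factorial : ℝ)) *
        ((-1)^k / ((k.factorial : ℝ) * P k (N+1/2)) * ((r*s)/2)^(2*k))
    = ∑ k ∈ Finset.range (n/2+1), ∑ m ∈ Finset.range (k+1),
        (-1)^m * c^(n-2*m) * r^n *
          ((k.choose m : ℝ) / (((n-2*k).factorial : ℝ) * (k.factorial : ℝ) * P k (N+1/2) * 4^k)) := by
      refine Finset.sum_congr rfl (fun k hk => ?_)
      have h2k : 2*k ≤ n := by
        have := Finset.mem_range.mp hk; omega
      have hr : r^(n-2*k) * r^(2*k) = r^n := by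
        rw [← pow_add]; congr 1; omega
      have e1 : ((r*s)/2)^(2*k) = r^(2*k) * (1-c^2)^k / 4^k := by
        rw [pow_mul]
        have : ((r*s)/2)^2 = r^2 * (1-c^2) / 4 := by
          rw [div_pow, mul_pow, hs2]; norm_num
        rw [this, div_pow, mul_pow, ← pow_mul]
      have e2 : ((-1:ℝ))^k * (1-c^2)^k = (c^2-1)^k := by
        rw [← mul_pow, show (-1:ℝ)*(1-c^2) = c^2-1 from by ring]
      have step1 : ((r*c)^(n-2*k) / ((n-2*k).factorial : ℝ)) *
          ((-1)^k / ((k.factorial : ℝ) * P k (N+1/2)) * ((r*s)/2)^(2*k))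
          = (c^2-1)^k * c^(n-2*k) * r^n /
            (((n-2*k).factorial : ℝ) * (k.factorial : ℝ) * P k (N+1/2) * 4^k) := by
        rw [mul_pow, e1, ← hr, ← e2]
        ring
      rw [step1]
      have hexp : (c^2-1)^k = ∑ j ∈ Finset.range (k+1), (c^2)^j * (-1)^(k-j) * (k.choose j : ℝ) := by
        rw [sub_eq_add_neg, add_pow]
      rw [hexp, Finset.sum_mul, Finset.sum_mul, Finset.sum_div]
      rw [← Finset.sum_range_reflect]
      refine Finset.sum_congr rfl (fun m hm => ?_)
      have hmk : m ≤ k := by have := Finset.mem_range.mp hm; omega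
      have hred : k + 1 - 1 - m = k - m := by omega
      rw [hred]
      have b1 : (c^2)^(k-m) = c^(2*(k-m)) := by rw [pow_mul]
      have b2 : c^(2*(k-m)) * c^(n-2*k) = c^(n-2*m) := by
        rw [← pow_add]; congr 1; omega
      have b3 : k - (k-m) = m := by omega
      have b4 : (k.choose (k-m) : ℝ) = (k.choose m : ℝ) := by
        rw [Nat.choose_symm hmk]
      rw [b1, b3, b4]
      rw [show (c^(2*(k-m)) * (-1:ℝ)^m * (k.choose m : ℝ)) * c^(n-2*k) * r^n
        = (-1)^m * (c^(2*(k-m)) * c^(n-2*k)) * r^n * (k.choose m : ℝ) from by ring, b2]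
      ring
    _ = ∑ k ∈ Finset.range (n/2+1), ∑ m ∈ Finset.range (n/2+1),
        (-1)^m * c^(n-2*m) * r^n *
          ((k.choose m : ℝ) / (((n-2*k).factorial : ℝ) * (k.factorial : ℝ) * P k (N+1/2) * 4^k)) := by
      refine Finset.sum_congr rfl (fun k hk => ?_)
      refine Finset.sum_subset ?_ (fun m hm1 hm2 => ?_)
      · intro x hx
        simp only [Finset.mem_range] at hx ⊢
        have hk' := Finset.mem_range.mp hk
        omega
      · have : k < m := by
          simp only [Finset.mem_range] at hm1 hm2; omega
        rw [Nat.choose_eq_zero_of_lt this]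
        simp
    _ = ∑ m ∈ Finset.range (n/2+1),
        (-1)^m * c^(n-2*m) * r^n *
          (P (n-m) N * 2^(n-2*m) /
            (((n-2*m).factorial : ℝ) * (m.factorial : ℝ) * P n (2*N))) := by
      rw [Finset.sum_comm]
      refine Finset.sum_congr rfl (fun m hm => ?_)
      rw [← Finset.mul_sum, key N hN n m (by have := Finset.mem_range.mp hm; omega)]
    _ = Geg n N c / P n (2*N) * r^n := by
      rw [Geg, Finset.sum_div, Finset.sum_mul]
      refine Finset.sum_congr rfl (fun m hm => ?_)
      rw [mul_pow, P_def]
      ring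


/-- Feldheim–Vilenkin generating function:
`Σ_n (C_n^N(cos θ)/(2N)_n) r^n = exp(r cos θ) j_(N-1/2)(r sin θ)`
(equivalently `Σ_n (C_n^N(cos θ)/C_n^N(1)) r^n/n!` with `C_n^N(1) = (2N)_n/n!`). -/

theorem feldheim_vilenkin (N : ℝ) (hN : 0 < N) (r θ : ℝ) :
    HasSum (fun n : ℕ => Geg n N (Real.cos θ) / (ascPochhammer ℝ n).eval (2 * N) * r ^ n)
      (Real.exp (r * Real.cos θ) * besselj (N - 1 / 2) (r * Real.sin θ)) := by
  have hA : (0:ℝ) < N + 1/2 := by linarith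
  set c := Real.cos θ with hc
  set s := Real.sin θ with hs
  set e : ℕ → ℝ := fun m => (r*c)^m / (m.factorial : ℝ) with he
  set b : ℕ → ℝ := fun k => (-1)^k / ((k.factorial : ℝ) * P k (N+1/2)) * ((r*s)/2)^(2*k) with hb
  -- exp series
  have hexp : HasSum e (Real.exp (r*c)) := by
    rw [Real.exp_eq_exp_ℝ]
    exact NormedSpace.expSeries_div_hasSum_exp (r*c)
  -- bessel series
  have hbn : Summable (fun k => ‖b k‖) := bessel_summable_norm hA (r*s)
  have hbs : Summable b := hbn.of_norm
  have hJ : HasSum b (besselj (N - 1/2) (r*s)) := by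
    have hbj : besselj (N - 1/2) (r*s) = ∑' k, b k := by
      rw [besselj]
      congr 1
      funext k
      rw [show N - 1/2 + 1 = N + 1/2 from by ring, P_def, hb]
    rw [hbj]
    exact hbs.hasSum
  -- norm summability of exp series
  have hen : Summable (fun m => ‖e m‖) := by
    have : (fun m => ‖e m‖) = fun m => |r*c|^m / (m.factorial : ℝ) := by
      funext m
      rw [he]
      simp [norm_div, abs_pow, Nat.abs_cast, abs_mul]
    rw [this]
    exact Real.summable_pow_div_factorial _
  -- product sum over ℕ × ℕ
  have hF : Summable (fun x : ℕ × ℕ => e x.1 * b x.2) :=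
    (hen.mul_norm hbn).of_norm
  have hprod : HasSum (fun x : ℕ × ℕ => e x.1 * b x.2)
      (Real.exp (r*c) * besselj (N - 1/2) (r*s)) := hexp.mul hJ hF
  -- zero extension along (m,k) ↦ (m+2k, k)
  set G : ℕ × ℕ → ℝ := fun y => if 2*y.2 ≤ y.1 then e (y.1 - 2*y.2) * b y.2 else 0 with hG
  have hinj : Function.Injective (fun x : ℕ × ℕ => (x.1 + 2*x.2, x.2)) := by
    intro a1 a2 h
    simp only [Prod.mk.injEq] at h
    obtain ⟨h1, h2⟩ := h
    exact Prod.ext (by omega) h2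
  have hGcomp : (G ∘ fun x : ℕ × ℕ => (x.1 + 2*x.2, x.2)) = fun x : ℕ × ℕ => e x.1 * b x.2 := by
    funext x
    simp only [hG, Function.comp_apply]
    rw [if_pos (by omega)]
    congr 2
    omega
  have hGzero : ∀ y ∉ Set.range (fun x : ℕ × ℕ => (x.1 + 2*x.2, x.2)), G y = 0 := by
    intro y hy
    rw [hG]
    by_cases h : 2*y.2 ≤ y.1
    · exfalso
      refine hy ⟨(y.1 - 2*y.2, y.2), ?_⟩
      exact Prod.ext (by show y.1 - 2*y.2 + 2*y.2 = y.1; omega) rfl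
    · exact if_neg h
  have hGsum : HasSum G (Real.exp (r*c) * besselj (N - 1/2) (r*s)) := by
    rw [← Function.Injective.hasSum_iff hinj hGzero, hGcomp]
    exact hprod
  -- to sigma type and fiberwise
  have hGsig : HasSum (fun x : (Σ _ : ℕ, ℕ) => G (x.1, x.2))
      (Real.exp (r*c) * besselj (N - 1/2) (r*s)) := by
    exact (Equiv.sigmaEquivProd ℕ ℕ).hasSum_iff.mpr hGsum
  have hfiber : ∀ n : ℕ, HasSum (fun k : ℕ => G (n, k))
      (∑ k ∈ Finset.range (n/2+1), G (n, k)) := by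
    intro n
    apply hasSum_sum_of_ne_finset_zero
    intro k hk
    simp only [Finset.mem_range] at hk
    rw [hG]
    exact if_neg (by omega)
  have hg : HasSum (fun n => ∑ k ∈ Finset.range (n/2+1), G (n, k))
      (Real.exp (r*c) * besselj (N - 1/2) (r*s)) := HasSum.sigma hGsig hfiber
  have hfun : (fun n : ℕ => Geg n N c / (ascPochhammer ℝ n).eval (2 * N) * r ^ n)
      = fun n => ∑ k ∈ Finset.range (n/2+1), G (n, k) := by
    funext n
    rw [P_def n (2*N), ← per_n N hN r θ n]
    refine Finset.sum_congr rfl (fun k hk => ?_)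
    simp only [Finset.mem_range] at hk
    simp only [hG]
    rw [if_pos (show 2*k ≤ n by omega)]
  rw [hfun]
  exact hg
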